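/- Let a, b, c, d, e, f, g, h be real numbers and ξ ∈ ℝ be such that a ξ + c > 0, e ξ + g > 0, f ξ + h > 0, and Ξ1 := (a f − b e) ξ² + (a h − b g + c f − d e) ξ + (c h − d g) > 0 (equivalently Ξ1 = (a ξ + c)(f ξ + h) − (b ξ + d)(e ξ + g)). Then ∫_0^{−(b ξ + d)/(a ξ + c)} [−ξ(a η + b) − c η − d] / [ξ(e η + f) + g η + h] dη = −Ξ1/(e ξ + g)² · [ log(f ξ + h) + log(a ξ + c) − log(Ξ1) ] + (b ξ + d)/(e ξ + g). -/

import Mathlib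

/-- The inner η-integral of the paper's 3D cut-volume double integral
(Eq. (12)): integrating the interface graph
ζ(ξ,η) = (−ξ(aη+b) − cη − d)/(ξ(eη+f) + gη + h) in η from 0 to the zero
η1 = −(bξ+d)/(aξ+c) of the numerator yields the integrand of F(ξ)
(Eq. (15)), where Ξ1 = (af−be)ξ² + (ah−bg+cf−de)ξ + (ch−dg). -/
theorem inner_eta_integral
    (a b c d e f g h ξ : ℝ)
    (hac : 0 < a * ξ + c) (heg : 0 < e * ξ + g) (hfh : 0 < f * ξ + h)
    (hΞ1 : 0 < (a * f - b * e) * ξ ^ 2 + (a * h - b * g + c * f - d * e) * ξ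
      + (c * h - d * g)) :
    ∫ η in (0 : ℝ)..(-(b * ξ + d) / (a * ξ + c)),
        (-(ξ * (a * η + b)) - c * η - d) / (ξ * (e * η + f) + g * η + h)
      = -((a * f - b * e) * ξ ^ 2 + (a * h - b * g + c * f - d * e) * ξ
            + (c * h - d * g)) / (e * ξ + g) ^ 2 *
          (Real.log (f * ξ + h) + Real.log (a * ξ + c)
            - Real.log ((a * f - b * e) * ξ ^ 2
                + (a * h - b * g + c * f - d * e) * ξ + (c * h - d * g)))
        + (b * ξ + d) / (e * ξ + g) := by
  have hXi : (a * f - b * e) * ξ ^ 2 + (a * h - b * g + c * f - d * e) * ξ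
      + (c * h - d * g) = (a*ξ+c)*(f*ξ+h) - (b*ξ+d)*(e*ξ+g) := by ring
  rw [hXi] at hΞ1 ⊢
  set A := a*ξ+c with hA
  set B := b*ξ+d with hB
  set E := e*ξ+g with hE
  set H := f*ξ+h with hH
  set Ξ := A*H - B*E with hΞ
  set η1 : ℝ := -B/A with hη1
  have hA0 : A ≠ 0 := ne_of_gt hac
  have hE0 : E ≠ 0 := ne_of_gt heg
  have hη1v : E*η1 + H = Ξ/A := by
    rw [hη1, hΞ]; field_simp; ring
  have hΞA : 0 < Ξ/A := div_pos hΞ1 hac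
  have hpos : ∀ η ∈ Set.uIcc (0:ℝ) η1, 0 < E*η + H := by
    intro η hη
    rcases le_total (0:ℝ) η1 with hc | hc
    · rw [Set.uIcc_of_le hc] at hη
      nlinarith [hη.1, hη.2]
    · rw [Set.uIcc_of_ge hc] at hη
      have h1 : E*η1 + H ≤ E*η + H := by nlinarith [hη.1]
      linarith [hη1v ▸ hΞA]
  have hderiv : ∀ η ∈ Set.uIcc (0:ℝ) η1,
      HasDerivAt (fun η => -(A/E)*η + Ξ/E^2 * Real.log (E*η + H))
        ((-(ξ * (a * η + b)) - c * η - d) / (ξ * (e * η + f) + g * η + h)) η := by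
    intro η hη
    have hp := hpos η hη
    have h1 : HasDerivAt (fun η : ℝ => E*η + H) E η := by
      simpa using ((hasDerivAt_id η).const_mul E).add_const H
    have h2 : HasDerivAt (fun η => Real.log (E*η + H)) (E / (E*η + H)) η :=
      h1.log (ne_of_gt hp)
    have h3 : HasDerivAt (fun η => -(A/E)*η + Ξ/E^2 * Real.log (E*η + H))
        (-(A/E) + Ξ/E^2 * (E / (E*η + H))) η := by
      exact (((hasDerivAt_id' η).const_mul (-(A/E))).add (h2.const_mul (Ξ/E^2))).congr_deriv (by ring)
    convert h3 using 1
    have hd : ξ * (e * η + f) + g * η + h = E*η + H := by rw [hE, hH]; ring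
    rw [hd, hΞ]
    have hp' : E*η + H ≠ 0 := ne_of_gt hp
    generalize hD : E*η + H = D at hp' ⊢
    field_simp
    rw [← hD, hA, hB]
    ring
  have hcont : IntervalIntegrable
      (fun η => (-(ξ * (a * η + b)) - c * η - d) / (ξ * (e * η + f) + g * η + h))
      MeasureTheory.volume 0 η1 := by
    apply ContinuousOn.intervalIntegrable
    apply ContinuousOn.div
    · fun_prop
    · fun_prop
    · intro η hη
      have := hpos η hη
      have hd : ξ * (e * η + f) + g * η + h = E*η + H := by rw [hE, hH]; ring
      rw [hd]; exact ne_of_gt this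
  rw [intervalIntegral.integral_eq_sub_of_hasDerivAt hderiv hcont]
  have e1 : E*η1 + H = Ξ/A := hη1v
  simp only [e1, mul_zero, add_zero, zero_add]
  rw [Real.log_div (ne_of_gt hΞ1) hA0]
  rw [hη1]
  field_simp
  ring
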